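/- Let Z, η, U, T be random variables (all discrete for simplicity) with T = τ(Z). If Z ⊥ η | U and Z ⊥ U | T, then Z ⊥ η | T. -/
import Mathlib

-- Probability of an event on a finite probability space with weights `p`.
open Classical in
noncomputable def pr {Ω : Type*} [Fintype Ω] (p : Ω → ℝ) (E : Ω → Prop) : ℝ :=
  ∑ ω, if E ω then p ω else 0

section helpers
variable {Ω : Type*} [Fintype Ω] (p : Ω → ℝ)

open Classical in
lemma pr_congr {E F : Ω → Prop} (h : ∀ ω, E ω ↔ F ω) : pr p E = pr p F := by
  unfold pr; exact Finset.sum_congr rfl fun ω _ => by simp [h ω]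

open Classical in
lemma pr_of_empty {E : Ω → Prop} (h : ∀ ω, ¬ E ω) : pr p E = 0 := by
  unfold pr; exact Finset.sum_eq_zero fun ω _ => by simp [h ω]

open Classical in
lemma pr_pos (hp : ∀ ω, 0 < p ω) {E : Ω → Prop} (h : ∃ ω, E ω) : 0 < pr p E := by
  obtain ⟨ω₀, hω₀⟩ := h
  unfold pr
  refine Finset.sum_pos' (fun ω _ => ?_) ⟨ω₀, Finset.mem_univ _, ?_⟩
  · split <;> [exact (hp ω).le; rfl]
  · simp [hω₀, hp ω₀]

open Classical in
lemma pr_fiber {V : Type*} (f : Ω → V) (E : Ω → Prop) :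
    ∑ v ∈ Finset.image f Finset.univ, pr p (fun ω => E ω ∧ f ω = v) = pr p E := by
  unfold pr
  rw [Finset.sum_comm]
  refine Finset.sum_congr rfl fun ω _ => ?_
  by_cases hE : E ω
  · simp only [hE, true_and]
    rw [Finset.sum_ite_eq (Finset.image f Finset.univ) (f ω) (fun _ => p ω)]
    simp [hE]
  · simp [hE]

end helpers

/-- for discrete random variables with `T = τ(Z)`, if `Z ⊥ η | U`
and `Z ⊥ U | T`, then `Z ⊥ η | T`.  (Conditional independence via
cross-multiplied factorization of conditional pmfs.) -/
theorem Z_indep_eta_given_T {Ω 𝓩 𝓔 𝓤 𝓣 : Type*} [Fintype Ω]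
    (p : Ω → ℝ) (hp : ∀ ω, 0 < p ω) (hsum : ∑ ω, p ω = 1)
    (Z : Ω → 𝓩) (η : Ω → 𝓔) (U : Ω → 𝓤) (τ : 𝓩 → 𝓣)
    -- Z ⊥ η | U
    (hZηU : ∀ (z : 𝓩) (e : 𝓔) (u : 𝓤),
      pr p (fun ω => Z ω = z ∧ η ω = e ∧ U ω = u) * pr p (fun ω => U ω = u)
        = pr p (fun ω => Z ω = z ∧ U ω = u) * pr p (fun ω => η ω = e ∧ U ω = u))
    -- Z ⊥ U | T, where T = τ ∘ Z
    (hZUT : ∀ (z : 𝓩) (u : 𝓤) (t : 𝓣),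
      pr p (fun ω => Z ω = z ∧ U ω = u ∧ τ (Z ω) = t) * pr p (fun ω => τ (Z ω) = t)
        = pr p (fun ω => Z ω = z ∧ τ (Z ω) = t) * pr p (fun ω => U ω = u ∧ τ (Z ω) = t)) :
    -- conclusion: Z ⊥ η | T
    ∀ (z : 𝓩) (e : 𝓔) (t : 𝓣),
      pr p (fun ω => Z ω = z ∧ η ω = e ∧ τ (Z ω) = t) * pr p (fun ω => τ (Z ω) = t)
        = pr p (fun ω => Z ω = z ∧ τ (Z ω) = t) * pr p (fun ω => η ω = e ∧ τ (Z ω) = t) := by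
  intro z e t
  classical
  by_cases hzt : τ z = t
  case neg =>
    -- both sides vanish since `Z ω = z` forces `τ (Z ω) = τ z ≠ t`
    rw [pr_of_empty p (E := fun ω => Z ω = z ∧ η ω = e ∧ τ (Z ω) = t)
        (fun ω ⟨h1, _, h3⟩ => hzt (h1 ▸ h3)),
      pr_of_empty p (E := fun ω => Z ω = z ∧ τ (Z ω) = t)
        (fun ω ⟨h1, h3⟩ => hzt (h1 ▸ h3))]
    ring
  case pos =>
  -- simplify events containing `Z ω = z ∧ τ (Z ω) = t`
  rw [pr_congr p (E := fun ω => Z ω = z ∧ η ω = e ∧ τ (Z ω) = t)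
      (F := fun ω => Z ω = z ∧ η ω = e)
      (fun ω => ⟨fun ⟨a, b, _⟩ => ⟨a, b⟩, fun ⟨a, b⟩ => ⟨a, b, by rw [a, hzt]⟩⟩),
    pr_congr p (E := fun ω => Z ω = z ∧ τ (Z ω) = t) (F := fun ω => Z ω = z)
      (fun ω => ⟨fun ⟨a, _⟩ => a, fun a => ⟨a, by rw [a, hzt]⟩⟩)]
  by_cases hz : ∃ ω, Z ω = z
  case neg =>
    rw [pr_of_empty p (E := fun ω => Z ω = z ∧ η ω = e) (fun ω ⟨a, _⟩ => hz ⟨ω, a⟩),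
      pr_of_empty p (E := fun ω => Z ω = z) (fun ω a => hz ⟨ω, a⟩)]
    ring
  case pos =>
  -- Key A : `T ⊥ η | U` (summing `hZηU` over the fiber of `τ` above `t`)
  have keyA : ∀ u : 𝓤,
      pr p (fun ω => η ω = e ∧ τ (Z ω) = t ∧ U ω = u) * pr p (fun ω => U ω = u)
        = pr p (fun ω => τ (Z ω) = t ∧ U ω = u) * pr p (fun ω => η ω = e ∧ U ω = u) := by
    intro u
    have hA : pr p (fun ω => η ω = e ∧ τ (Z ω) = t ∧ U ω = u)
        = ∑ z' ∈ Finset.image Z Finset.univ,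
            pr p (fun ω => Z ω = z' ∧ η ω = e ∧ τ (Z ω) = t ∧ U ω = u) := by
      rw [← pr_fiber p Z (fun ω => η ω = e ∧ τ (Z ω) = t ∧ U ω = u)]
      exact Finset.sum_congr rfl fun z' _ => pr_congr p fun ω => by tauto
    have hB : pr p (fun ω => τ (Z ω) = t ∧ U ω = u)
        = ∑ z' ∈ Finset.image Z Finset.univ,
            pr p (fun ω => Z ω = z' ∧ τ (Z ω) = t ∧ U ω = u) := by
      rw [← pr_fiber p Z (fun ω => τ (Z ω) = t ∧ U ω = u)]
      exact Finset.sum_congr rfl fun z' _ => pr_congr p fun ω => by tauto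
    rw [hA, hB, Finset.sum_mul, Finset.sum_mul]
    refine Finset.sum_congr rfl fun z' _ => ?_
    by_cases hz' : τ z' = t
    · rw [pr_congr p (E := fun ω => Z ω = z' ∧ η ω = e ∧ τ (Z ω) = t ∧ U ω = u)
          (F := fun ω => Z ω = z' ∧ η ω = e ∧ U ω = u)
          (fun ω => ⟨fun ⟨a, b, _, c⟩ => ⟨a, b, c⟩,
            fun ⟨a, b, c⟩ => ⟨a, b, by rw [a, hz'], c⟩⟩),
        pr_congr p (E := fun ω => Z ω = z' ∧ τ (Z ω) = t ∧ U ω = u)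
          (F := fun ω => Z ω = z' ∧ U ω = u)
          (fun ω => ⟨fun ⟨a, _, c⟩ => ⟨a, c⟩, fun ⟨a, c⟩ => ⟨a, by rw [a, hz'], c⟩⟩)]
      exact hZηU z' e u
    · rw [pr_of_empty p (E := fun ω => Z ω = z' ∧ η ω = e ∧ τ (Z ω) = t ∧ U ω = u)
          (fun ω ⟨a, _, b, _⟩ => hz' (a ▸ b)),
        pr_of_empty p (E := fun ω => Z ω = z' ∧ τ (Z ω) = t ∧ U ω = u)
          (fun ω ⟨a, b, _⟩ => hz' (a ▸ b))]
      ring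
  -- Key B : specialization of `hZUT` using `τ z = t`
  have keyB : ∀ u : 𝓤,
      pr p (fun ω => Z ω = z ∧ U ω = u) * pr p (fun ω => τ (Z ω) = t)
        = pr p (fun ω => Z ω = z) * pr p (fun ω => U ω = u ∧ τ (Z ω) = t) := by
    intro u
    have h := hZUT z u t
    rwa [pr_congr p (E := fun ω => Z ω = z ∧ U ω = u ∧ τ (Z ω) = t)
        (F := fun ω => Z ω = z ∧ U ω = u)
        (fun ω => ⟨fun ⟨a, b, _⟩ => ⟨a, b⟩, fun ⟨a, b⟩ => ⟨a, b, by rw [a, hzt]⟩⟩),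
      pr_congr p (E := fun ω => Z ω = z ∧ τ (Z ω) = t) (F := fun ω => Z ω = z)
        (fun ω => ⟨fun ⟨a, _⟩ => a, fun a => ⟨a, by rw [a, hzt]⟩⟩)] at h
  -- per-fiber identity over values of U in the range of U
  have claim : ∀ u ∈ Finset.image U Finset.univ,
      pr p (fun ω => Z ω = z ∧ η ω = e ∧ U ω = u) * pr p (fun ω => τ (Z ω) = t)
        = pr p (fun ω => Z ω = z) * pr p (fun ω => η ω = e ∧ τ (Z ω) = t ∧ U ω = u) := by
    intro u hu
    obtain ⟨ω₀, _, hω₀⟩ := Finset.mem_image.mp hu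
    have hUpos : 0 < pr p (fun ω => U ω = u) := pr_pos p hp ⟨ω₀, hω₀⟩
    apply mul_right_cancel₀ hUpos.ne'
    have h1 := hZηU z e u
    have h2 := keyB u
    have h3 := keyA u
    have h4 : pr p (fun ω => U ω = u ∧ τ (Z ω) = t)
        = pr p (fun ω => τ (Z ω) = t ∧ U ω = u) := pr_congr p fun ω => and_comm
    linear_combination pr p (fun ω => τ (Z ω) = t) * h1
      + pr p (fun ω => η ω = e ∧ U ω = u) * h2
      + pr p (fun ω => Z ω = z) * pr p (fun ω => η ω = e ∧ U ω = u) * h4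
      - pr p (fun ω => Z ω = z) * h3
  -- sum over u
  have d1 : pr p (fun ω => Z ω = z ∧ η ω = e)
      = ∑ u ∈ Finset.image U Finset.univ,
          pr p (fun ω => Z ω = z ∧ η ω = e ∧ U ω = u) := by
    rw [← pr_fiber p U (fun ω => Z ω = z ∧ η ω = e)]
    exact Finset.sum_congr rfl fun u _ => pr_congr p fun ω => by tauto
  have d2 : pr p (fun ω => η ω = e ∧ τ (Z ω) = t)
      = ∑ u ∈ Finset.image U Finset.univ,
          pr p (fun ω => η ω = e ∧ τ (Z ω) = t ∧ U ω = u) := by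
    rw [← pr_fiber p U (fun ω => η ω = e ∧ τ (Z ω) = t)]
    exact Finset.sum_congr rfl fun u _ => pr_congr p fun ω => by tauto
  rw [d1, d2, Finset.sum_mul, Finset.mul_sum]
  exact Finset.sum_congr rfl claim
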